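/- Let p ≥ 2, d ≥ 1, and 1 ≤ s ≤ d be integers. Then ∑_{λ ∈ Par(d)} (m_s(λ)/(p-1)) · ∏_{u ≥ 1} binom(m_u(λ)+p-2, m_u(λ)) = ∑_{(λ_1,…,λ_{p-1}) ∈ Par_{p-1}(d)} m_s(λ_1), where the first sum is an identity of rational numbers whose value is an integer. -/

import Mathlib

open Finset

lemma card_antidiagonalTuple' (k n : ℕ) :
    (Finset.Nat.antidiagonalTuple k n).card = Nat.multichoose k n := by
  rw [← Finset.piAntidiag_univ_fin_eq_antidiagonalTuple, ← Finset.map_sym_eq_piAntidiag,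
    Finset.card_map, Finset.sym_univ, Finset.card_univ, Sym.card_sym_eq_multichoose,
    Fintype.card_fin]

lemma multiset_sum_sum {ι : Type*} (t : Finset ι) (g : ι → Multiset ℕ) :
    (∑ i ∈ t, g i).sum = ∑ i ∈ t, (g i).sum := by
  classical
  induction t using Finset.cons_induction with
  | empty => simp
  | cons a t ha ih => rw [Finset.sum_cons, Finset.sum_cons, Multiset.sum_add, ih]

lemma pi_sum_at {q : ℕ} (c : Fin q → ℕ) (i₀ : Fin q) (F : Nat.Partition (c i₀) → ℕ) :
    ∑ f : (∀ i, Nat.Partition (c i)), F (f i₀)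
      = (∑ μ : Nat.Partition (c i₀), F μ) *
        ∏ i ∈ Finset.univ.erase i₀, Fintype.card (Nat.Partition (c i)) := by
  have hcard : Fintype.card (∀ j : {j // j ≠ i₀}, Nat.Partition (c j)) =
      ∏ i ∈ Finset.univ.erase i₀, Fintype.card (Nat.Partition (c i)) := by
    rw [Fintype.card_pi]
    exact (Finset.prod_subtype (Finset.univ.erase i₀) (p := fun j => j ≠ i₀)
      (fun x => by simp) (fun i => Fintype.card (Nat.Partition (c i)))).symm
  rw [Fintype.sum_equiv (Equiv.piSplitAt i₀ (fun i => Nat.Partition (c i)))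
      (fun f => F (f i₀)) (fun x => F x.1) (fun f => rfl)]
  rw [Fintype.sum_prod_type]
  simp only [Finset.sum_const, Finset.card_univ, smul_eq_mul, hcard]
  rw [← Finset.mul_sum, mul_comm]

lemma S_symm {q d s : ℕ} (i i₀ : Fin q) :
    ∑ c ∈ Finset.Nat.antidiagonalTuple q d,
        ∑ f : (∀ j, Nat.Partition (c j)), (f i).parts.count s
      = ∑ c ∈ Finset.Nat.antidiagonalTuple q d,
        ∑ f : (∀ j, Nat.Partition (c j)), (f i₀).parts.count s := by
  classical
  set e := Equiv.swap i i₀ with he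
  refine Finset.sum_equiv (Equiv.piCongrLeft' (fun _ => ℕ) e.symm) ?_ ?_
  · intro c
    simp only [Finset.Nat.mem_antidiagonalTuple, Equiv.piCongrLeft'_apply, Equiv.symm_symm]
    rw [Equiv.sum_comp e c]
  · intro c _
    refine Fintype.sum_equiv
      ((Equiv.piCongrLeft (fun j => Nat.Partition (c j)) e).symm) _ _ ?_
    intro f
    show (f i).parts.count s = (f (e i₀)).parts.count s
    rw [show e i₀ = i from Equiv.swap_apply_right i i₀]

lemma partI {q d s : ℕ} (i₀ : Fin q) :
    ∑ c ∈ Finset.Nat.antidiagonalTuple q d,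
        ∑ f : (∀ j, Nat.Partition (c j)), ∑ j, (f j).parts.count s
      = q * ∑ c ∈ Finset.Nat.antidiagonalTuple q d,
          ((∑ μ : Nat.Partition (c i₀), μ.parts.count s) *
            ∏ j ∈ Finset.univ.erase i₀, Fintype.card (Nat.Partition (c j))) := by
  classical
  calc ∑ c ∈ Finset.Nat.antidiagonalTuple q d,
        ∑ f : (∀ j, Nat.Partition (c j)), ∑ j, (f j).parts.count s
      = ∑ c ∈ Finset.Nat.antidiagonalTuple q d,
        ∑ j : Fin q, ∑ f : (∀ j', Nat.Partition (c j')), (f j).parts.count s :=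
        Finset.sum_congr rfl (fun c _ => Finset.sum_comm)
    _ = ∑ j : Fin q, ∑ c ∈ Finset.Nat.antidiagonalTuple q d,
        ∑ f : (∀ j', Nat.Partition (c j')), (f j).parts.count s := Finset.sum_comm
    _ = ∑ _j : Fin q, ∑ c ∈ Finset.Nat.antidiagonalTuple q d,
        ∑ f : (∀ j', Nat.Partition (c j')), (f i₀).parts.count s :=
        Finset.sum_congr rfl (fun j _ => S_symm j i₀)
    _ = q * ∑ c ∈ Finset.Nat.antidiagonalTuple q d,
        ∑ f : (∀ j', Nat.Partition (c j')), (f i₀).parts.count s := by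
        rw [Finset.sum_const, Finset.card_univ, Fintype.card_fin, smul_eq_mul]
    _ = q * ∑ c ∈ Finset.Nat.antidiagonalTuple q d,
          ((∑ μ : Nat.Partition (c i₀), μ.parts.count s) *
            ∏ j ∈ Finset.univ.erase i₀, Fintype.card (Nat.Partition (c j))) := by
        rw [Finset.sum_congr rfl (fun c _ => pi_sum_at c i₀ (fun μ => μ.parts.count s))]

section Aux2

variable {q d : ℕ}

def DecF (q : ℕ) (M : Multiset ℕ) : Finset (Fin q → Multiset ℕ) :=
  (Fintype.piFinset fun _ : Fin q => M.powerset.toFinset).filter fun g => ∑ i, g i = M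

lemma mem_DecF {q : ℕ} {M : Multiset ℕ} {g : Fin q → Multiset ℕ} :
    g ∈ DecF q M ↔ (∀ i, g i ≤ M) ∧ ∑ i, g i = M := by
  simp [DecF, Fintype.mem_piFinset, Multiset.mem_powerset]

lemma card_antidiagonalTuple'' (k n : ℕ) :
    (Finset.Nat.antidiagonalTuple k n).card = Nat.multichoose k n := by
  rw [← Finset.piAntidiag_univ_fin_eq_antidiagonalTuple, ← Finset.map_sym_eq_piAntidiag,
    Finset.card_map, Finset.sym_univ, Finset.card_univ, Sym.card_sym_eq_multichoose,
    Fintype.card_fin]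

lemma decF_card (q : ℕ) (M : Multiset ℕ) :
    (DecF q M).card = ∏ u ∈ M.toFinset, Nat.multichoose q (M.count u) := by
  classical
  have hrw : ∏ u ∈ M.toFinset, Nat.multichoose q (M.count u)
      = (M.toFinset.pi (fun u => Finset.Nat.antidiagonalTuple q (M.count u))).card := by
    rw [Finset.card_pi]
    exact Finset.prod_congr rfl fun u _ => (card_antidiagonalTuple'' q (M.count u)).symm
  rw [hrw]
  have key : ∀ (b : ∀ u ∈ M.toFinset, Fin q → ℕ) (jdx : Fin q) (v : ℕ),
      Multiset.count v (∑ u ∈ M.toFinset.attach, Multiset.replicate (b u.1 u.2 jdx) u.1)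
        = if hv : v ∈ M.toFinset then b v hv jdx else 0 := by
    intro b jdx v
    rw [Multiset.count_sum']
    by_cases hv : v ∈ M.toFinset
    · rw [dif_pos hv]
      rw [Finset.sum_eq_single_of_mem (⟨v, hv⟩ : {x // x ∈ M.toFinset})
        (Finset.mem_attach _ _)]
      · rw [Multiset.count_replicate, if_pos rfl]
      · intro u _ hu
        rw [Multiset.count_replicate, if_neg]
        intro h; exact hu (Subtype.ext h)
    · rw [dif_neg hv]
      refine Finset.sum_eq_zero fun u _ => ?_
      rw [Multiset.count_replicate, if_neg]
      intro h; exact hv (h ▸ u.2)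
  refine Finset.card_bij' (fun g _ => fun u _ jdx => (g jdx).count u)
    (fun b _ => fun jdx => ∑ u ∈ M.toFinset.attach, Multiset.replicate (b u.1 u.2 jdx) u.1)
    ?_ ?_ ?_ ?_
  · intro g hg
    rw [Finset.mem_pi]
    intro u hu
    rw [Finset.Nat.mem_antidiagonalTuple]
    rw [← Multiset.count_sum', (mem_DecF.mp hg).2]
  · intro b hb
    rw [mem_DecF]
    have hbmem := Finset.mem_pi.mp hb
    constructor
    · intro jdx
      rw [Multiset.le_iff_count]
      intro v
      rw [key b jdx v]
      by_cases hv : v ∈ M.toFinset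
      · rw [dif_pos hv]
        have hsum := Finset.Nat.mem_antidiagonalTuple.mp (hbmem v hv)
        calc b v hv jdx ≤ ∑ j, b v hv j :=
              Finset.single_le_sum (fun _ _ => Nat.zero_le _) (Finset.mem_univ jdx)
          _ = M.count v := hsum
      · rw [dif_neg hv]; exact Nat.zero_le _
    · ext v
      rw [Multiset.count_sum']
      by_cases hv : v ∈ M.toFinset
      · calc ∑ jdx, Multiset.count v (∑ u ∈ M.toFinset.attach,
              Multiset.replicate (b u.1 u.2 jdx) u.1)
            = ∑ jdx, b v hv jdx := by
              refine Finset.sum_congr rfl fun jdx _ => ?_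
              rw [key b jdx v, dif_pos hv]
          _ = M.count v := Finset.Nat.mem_antidiagonalTuple.mp (hbmem v hv)
      · calc ∑ jdx, Multiset.count v (∑ u ∈ M.toFinset.attach,
              Multiset.replicate (b u.1 u.2 jdx) u.1)
            = ∑ _jdx : Fin q, 0 := by
              refine Finset.sum_congr rfl fun jdx _ => ?_
              rw [key b jdx v, dif_neg hv]
          _ = 0 := by simp
          _ = M.count v :=
            (Multiset.count_eq_zero_of_notMem (fun h => hv (Multiset.mem_toFinset.mpr h))).symm
  · intro g hg
    funext jdx
    ext v
    show Multiset.count v (∑ u ∈ M.toFinset.attach,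
      Multiset.replicate ((g jdx).count u.1) u.1) = _
    rw [key (fun u _ jdx => (g jdx).count u) jdx v]
    by_cases hv : v ∈ M.toFinset
    · rw [dif_pos hv]
    · rw [dif_neg hv]
      have h1 : (g jdx).count v ≤ M.count v :=
        Multiset.le_iff_count.mp ((mem_DecF.mp hg).1 jdx) v
      have h2 : M.count v = 0 :=
        Multiset.count_eq_zero_of_notMem (fun h => hv (Multiset.mem_toFinset.mpr h))
      omega
  · intro b hb
    funext u hu jdx
    show Multiset.count u (∑ u' ∈ M.toFinset.attach,
      Multiset.replicate (b u'.1 u'.2 jdx) u'.1) = _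
    rw [key b jdx u, dif_pos hu]

end Aux2

def mergeP (q d : ℕ) : (Σ c : Fin q → ℕ, ∀ j, Nat.Partition (c j)) → Nat.Partition d :=
  fun x => if h : (∑ i, (x.2 i).parts).sum = d then Nat.Partition.ofSums d _ h
    else Nat.Partition.ofSums d (Multiset.replicate d 1) (by simp)

lemma multiset_sum_sum' {ι : Type*} (t : Finset ι) (g : ι → Multiset ℕ) :
    (∑ i ∈ t, g i).sum = ∑ i ∈ t, (g i).sum := by
  classical
  induction t using Finset.cons_induction with
  | empty => simp
  | cons a t ha ih => rw [Finset.sum_cons, Finset.sum_cons, Multiset.sum_add, ih]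

lemma mergeP_parts {q d : ℕ} (x : Σ c : Fin q → ℕ, ∀ j, Nat.Partition (c j))
    (hx : x.1 ∈ Finset.Nat.antidiagonalTuple q d) :
    (mergeP q d x).parts = ∑ i, (x.2 i).parts := by
  have hsum : (∑ i, (x.2 i).parts).sum = d := by
    rw [multiset_sum_sum']
    calc ∑ i, ((x.2 i).parts).sum = ∑ i, x.1 i :=
          Finset.sum_congr rfl fun i _ => (x.2 i).parts_sum
      _ = d := Finset.Nat.mem_antidiagonalTuple.mp hx
  rw [mergeP, dif_pos hsum, Nat.Partition.ofSums_parts]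
  rw [Multiset.filter_eq_self]
  intro a ha
  obtain ⟨i, _, hai⟩ := Multiset.mem_sum.mp ha
  exact Nat.pos_iff_ne_zero.mp ((x.2 i).parts_pos hai)

lemma sigma_partition_ext {q : ℕ} {x y : Σ c : Fin q → ℕ, ∀ j, Nat.Partition (c j)}
    (h1 : x.1 = y.1) (h2 : ∀ j, (x.2 j).parts = (y.2 j).parts) : x = y := by
  obtain ⟨c, f⟩ := x
  obtain ⟨c', f'⟩ := y
  dsimp at h1
  subst h1
  exact congrArg (Sigma.mk c) (funext fun j => Nat.Partition.ext (h2 j))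

lemma fiber_card {q d : ℕ} (lam : Nat.Partition d) :
    (((Finset.Nat.antidiagonalTuple q d).sigma
        (fun c => (Finset.univ : Finset (∀ j, Nat.Partition (c j))))).filter
          (fun x => mergeP q d x = lam)).card = (DecF q lam.parts).card := by
  classical
  refine Finset.card_bij' (fun x _ => fun jdx => (x.2 jdx).parts)
    (fun g _ => ⟨fun jdx => (g jdx).sum, fun jdx => Nat.Partition.ofSums _ (g jdx) rfl⟩)
    ?_ ?_ ?_ ?_
  · intro x hx
    obtain ⟨hx1, hx2⟩ := Finset.mem_filter.mp hx
    have hA := (Finset.mem_sigma.mp hx1).1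
    have hmerge : ∑ i, (x.2 i).parts = lam.parts := by
      rw [← mergeP_parts x hA, hx2]
    rw [mem_DecF]
    refine ⟨fun jdx => ?_, hmerge⟩
    rw [← hmerge]
    exact Finset.single_le_sum (f := fun i => (x.2 i).parts)
      (fun i _ => Multiset.zero_le _) (Finset.mem_univ jdx)
  · intro g hg
    obtain ⟨hle, hsum⟩ := mem_DecF.mp hg
    have hpos : ∀ jdx : Fin q, ∀ a ∈ g jdx, a ≠ 0 := by
      intro jdx a ha
      exact Nat.pos_iff_ne_zero.mp (lam.parts_pos (Multiset.mem_of_le (hle jdx) ha))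
    have hparts : ∀ jdx : Fin q,
        (Nat.Partition.ofSums (g jdx).sum (g jdx) rfl).parts = g jdx := by
      intro jdx
      rw [Nat.Partition.ofSums_parts, Multiset.filter_eq_self]
      exact hpos jdx
    have hA : (fun jdx => (g jdx).sum) ∈ Finset.Nat.antidiagonalTuple q d := by
      rw [Finset.Nat.mem_antidiagonalTuple, ← multiset_sum_sum', hsum, lam.parts_sum]
    rw [Finset.mem_filter]
    constructor
    · exact Finset.mem_sigma.mpr ⟨hA, Finset.mem_univ _⟩
    · refine Nat.Partition.ext ?_
      rw [mergeP_parts _ hA]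
      calc ∑ i, (Nat.Partition.ofSums (g i).sum (g i) rfl).parts
          = ∑ i, g i := Finset.sum_congr rfl fun i _ => hparts i
        _ = lam.parts := hsum
  · intro x hx
    refine sigma_partition_ext (funext fun jdx => (x.2 jdx).parts_sum) (fun jdx => ?_)
    show (Nat.Partition.ofSums ((x.2 jdx).parts).sum ((x.2 jdx).parts) rfl).parts
      = (x.2 jdx).parts
    rw [Nat.Partition.ofSums_parts, Multiset.filter_eq_self]
    exact fun a ha => Nat.pos_iff_ne_zero.mp ((x.2 jdx).parts_pos ha)
  · intro g hg
    obtain ⟨hle, hsum⟩ := mem_DecF.mp hg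
    funext jdx
    show (Nat.Partition.ofSums (g jdx).sum (g jdx) rfl).parts = g jdx
    rw [Nat.Partition.ofSums_parts, Multiset.filter_eq_self]
    exact fun a ha =>
      Nat.pos_iff_ne_zero.mp (lam.parts_pos (Multiset.mem_of_le (hle jdx) ha))

lemma prod_toFinset_Icc {q d : ℕ} (lam : Nat.Partition d) :
    ∏ u ∈ lam.parts.toFinset, Nat.multichoose q (lam.parts.count u)
      = ∏ u ∈ Finset.Icc 1 d, Nat.multichoose q (lam.parts.count u) := by
  refine Finset.prod_subset ?_ ?_
  · intro u hu
    rw [Multiset.mem_toFinset] at hu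
    rw [Finset.mem_Icc]
    refine ⟨lam.parts_pos hu, ?_⟩
    calc u ≤ lam.parts.sum := Multiset.single_le_sum (fun _ _ => Nat.zero_le _) u hu
      _ = d := lam.parts_sum
  · intro u _ hu
    rw [Multiset.count_eq_zero_of_notMem (fun h => hu (Multiset.mem_toFinset.mpr h)),
      Nat.multichoose_zero_right]

lemma partII {q d s : ℕ} :
    ∑ c ∈ Finset.Nat.antidiagonalTuple q d,
        ∑ f : (∀ j, Nat.Partition (c j)), ∑ j, (f j).parts.count s
      = ∑ lam : Nat.Partition d, lam.parts.count s *
          ∏ u ∈ Finset.Icc 1 d, Nat.multichoose q (lam.parts.count u) := by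
  classical
  rw [← Finset.sum_sigma (Finset.Nat.antidiagonalTuple q d)
    (fun c => (Finset.univ : Finset (∀ j, Nat.Partition (c j))))
    (fun x => ∑ j, (x.2 j).parts.count s)]
  rw [← Finset.sum_fiberwise_of_maps_to (g := mergeP q d)
    (t := (Finset.univ : Finset (Nat.Partition d))) (fun x _ => Finset.mem_univ _)
    (fun x => ∑ j, (x.2 j).parts.count s)]
  refine Finset.sum_congr rfl fun lam _ => ?_
  have hterm : ∀ x ∈ (((Finset.Nat.antidiagonalTuple q d).sigma
      (fun c => (Finset.univ : Finset (∀ j, Nat.Partition (c j))))).filter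
        (fun x => mergeP q d x = lam)),
      (∑ j, (x.2 j).parts.count s) = lam.parts.count s := by
    intro x hx
    obtain ⟨hx1, hx2⟩ := Finset.mem_filter.mp hx
    rw [← Multiset.count_sum', ← mergeP_parts x (Finset.mem_sigma.mp hx1).1, hx2]
  rw [Finset.sum_congr rfl hterm, Finset.sum_const, smul_eq_mul, fiber_card, decF_card,
    prod_toFinset_Icc]
  ring

/-- The sum `∑_{(λ_1,…,λ_{p-1}) ∈ Par_{p-1}(d)} m_s(λ_1)`: multipartitions are enumerated by
first choosing the sizes (an element of `antidiagonalTuple (p-1) d`) and then a partition of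
each size; for fixed sizes, the number of multipartitions with first component `μ` is the
product of the partition counts of the remaining sizes. -/
def multipartitionCountSum (p d s : ℕ) (hp : 2 ≤ p) : ℕ :=
  ∑ c ∈ Finset.Nat.antidiagonalTuple (p - 1) d,
    (∑ μ : Nat.Partition (c ⟨0, by omega⟩), μ.parts.count s) *
      ∏ i ∈ Finset.univ.erase (⟨0, by omega⟩ : Fin (p - 1)), Fintype.card (Nat.Partition (c i))

theorem stmt3 (p d s : ℕ) (hp : 2 ≤ p) (hd : 1 ≤ d) (hs : 1 ≤ s) (hsd : s ≤ d) :
    ∑ P : Nat.Partition d,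
        (P.parts.count s : ℚ) / (p - 1) *
          ∏ u ∈ Finset.Icc 1 d, ((P.parts.count u + p - 2).choose (P.parts.count u) : ℚ) =
      (multipartitionCountSum p d s hp : ℚ) := by
  have hq : 0 < p - 1 := by omega
  have key : (∑ lam : Nat.Partition d, lam.parts.count s *
      ∏ u ∈ Finset.Icc 1 d, Nat.multichoose (p - 1) (lam.parts.count u))
      = (p - 1) * multipartitionCountSum p d s hp := by
    rw [← partII, multipartitionCountSum]
    exact partI ⟨0, hq⟩
  have hchoose : ∀ m : ℕ, ((m + p - 2).choose m : ℚ) = (Nat.multichoose (p - 1) m : ℚ) := by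
    intro m
    rw [Nat.multichoose_eq]
    congr 2
    omega
  have hp1 : ((p : ℚ) - 1) = ((p - 1 : ℕ) : ℚ) := by
    rw [Nat.cast_sub (by omega : 1 ≤ p)]
    norm_num
  have hne : (((p - 1 : ℕ) : ℚ)) ≠ 0 := by
    exact_mod_cast Nat.pos_iff_ne_zero.mp hq
  calc ∑ P : Nat.Partition d,
        (P.parts.count s : ℚ) / (p - 1) *
          ∏ u ∈ Finset.Icc 1 d, ((P.parts.count u + p - 2).choose (P.parts.count u) : ℚ)
      = ∑ P : Nat.Partition d,
          ((P.parts.count s *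
            ∏ u ∈ Finset.Icc 1 d, Nat.multichoose (p - 1) (P.parts.count u) : ℕ) : ℚ)
            / ((p - 1 : ℕ) : ℚ) := by
        refine Finset.sum_congr rfl fun P _ => ?_
        rw [Finset.prod_congr rfl (fun u _ => hchoose (P.parts.count u)),
          div_mul_eq_mul_div, hp1]
        push_cast
        ring
    _ = ((∑ P : Nat.Partition d, P.parts.count s *
          ∏ u ∈ Finset.Icc 1 d, Nat.multichoose (p - 1) (P.parts.count u) : ℕ) : ℚ)
          / ((p - 1 : ℕ) : ℚ) := by
        rw [← Finset.sum_div, Nat.cast_sum]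
    _ = (((p - 1) * multipartitionCountSum p d s hp : ℕ) : ℚ) / ((p - 1 : ℕ) : ℚ) := by
        rw [key]
    _ = (multipartitionCountSum p d s hp : ℚ) := by
        rw [Nat.cast_mul]
        rw [mul_comm, mul_div_assoc, div_self hne, mul_one]
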